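/- Fix an integer m ≥ 1 and a symmetric relation c : ℤ → ℤ → Prop satisfying: (periodicity) for all i, j, c i j ↔ c (i + m) (j + m); (separation) for every i ∈ ℤ and every nonzero k ∈ ℤ, ¬ c i (i + k*m); (interval property) for all i < j < k, if c i k then c i j or c j k. Then at least one of the following holds: (1) there exists R ≥ 0 such that c i j implies |i − j| ≤ R; or (2) there exist nonempty sets A, B ⊆ ℤ with A ∪ B = ℤ and A ∩ B = ∅, each invariant under translation by m (i ∈ A ↔ i + m ∈ A), such that whenever i ∈ A, j ∈ B, and i < j, then c i j. -/

import Mathlib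

/-- Auxiliary: all elements of the class of `r` cross all later elements of the class of `t`. -/
def PP (m : ℤ) (c : ℤ → ℤ → Prop) (r t : ℤ) : Prop :=
  ∀ i j : ℤ, m ∣ (i - r) → m ∣ (j - t) → i < j → c i j

theorem halfplane_or_bounded_crossing (m : ℤ) (hm : 1 ≤ m) (c : ℤ → ℤ → Prop)
    (hsymm : ∀ i j, c i j → c j i)
    (hper : ∀ i j, c i j ↔ c (i + m) (j + m))
    (hsep : ∀ i : ℤ, ∀ k : ℤ, k ≠ 0 → ¬ c i (i + k * m))
    (hint : ∀ i j k : ℤ, i < j → j < k → c i k → c i j ∨ c j k) :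
    (∃ R : ℤ, 0 ≤ R ∧ ∀ i j, c i j → |i - j| ≤ R) ∨
    (∃ A B : Set ℤ, A.Nonempty ∧ B.Nonempty ∧ A ∪ B = Set.univ ∧ A ∩ B = ∅ ∧
      (∀ i, i ∈ A ↔ i + m ∈ A) ∧ (∀ i, i ∈ B ↔ i + m ∈ B) ∧
      (∀ i ∈ A, ∀ j ∈ B, i < j → c i j)) := by
  have hm0 : (0 : ℤ) < m := by linarith
  -- full periodicity: translate by any multiple of m
  have hperZ : ∀ u : ℤ, ∀ i j : ℤ, c i j ↔ c (i + u * m) (j + u * m) := by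
    intro u
    induction u using Int.induction_on with
    | zero => simp
    | succ n ih =>
        intro i j
        have e1 : i + ((n : ℤ) + 1) * m = (i + (n : ℤ) * m) + m := by ring
        have e2 : j + ((n : ℤ) + 1) * m = (j + (n : ℤ) * m) + m := by ring
        rw [e1, e2, ← hper, ih]
    | pred n ih =>
        intro i j
        have e1 : i + (-(n : ℤ)) * m = (i + (-(n : ℤ) - 1) * m) + m := by ring
        have e2 : j + (-(n : ℤ)) * m = (j + (-(n : ℤ) - 1) * m) + m := by ring
        rw [ih, e1, e2, ← hper]
  -- left propagation
  have propL : ∀ v : ℕ, ∀ i j : ℤ, c i j → i + (v : ℤ) * m < j → c (i + (v : ℤ) * m) j := by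
    intro v
    induction v with
    | zero => intro i j hc _; simpa using hc
    | succ n ih =>
        intro i j hc hlt
        have h4 : ((n + 1 : ℕ) : ℤ) * m = ((n : ℤ) + 1) * m := by push_cast; ring
        rw [h4] at hlt ⊢
        have h1 : i + (n : ℤ) * m < j := by nlinarith
        have h2 := ih i j hc h1
        have h3 : i + (n : ℤ) * m < i + ((n : ℤ) + 1) * m := by nlinarith
        rcases hint (i + (n : ℤ) * m) (i + ((n : ℤ) + 1) * m) j h3 hlt h2 with h | h
        · exfalso
          have e : i + ((n : ℤ) + 1) * m = (i + (n : ℤ) * m) + 1 * m := by ring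
          rw [e] at h
          exact hsep _ 1 one_ne_zero h
        · exact h
  by_cases hex : ∃ r t : ℤ, PP m c r t
  · -- halfplane case
    obtain ⟨r₀, t₀, hP⟩ := hex
    have hA : ∀ r s t : ℤ, PP m c r t → ¬ PP m c r s → PP m c s t := by
      intro r s t hrt hrs
      unfold PP at hrs
      push_neg at hrs
      obtain ⟨i₀, j₀, hi₀, hj₀, hlt₀, hnc⟩ := hrs
      intro j' k hj' hk hlt
      obtain ⟨d, hd⟩ : m ∣ (j' - j₀) := by
        have h := dvd_sub hj' hj₀
        have e : (j' - s) - (j₀ - s) = j' - j₀ := by ring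
        rwa [e] at h
      have hni₁ : ¬ c (i₀ + (j' - j₀)) j' := by
        intro hcon
        apply hnc
        rw [hperZ d i₀ j₀]
        have e1 : i₀ + d * m = i₀ + (j' - j₀) := by rw [hd]; ring
        have e2 : j₀ + d * m = j' := by linear_combination -hd
        rw [e1, e2]
        exact hcon
      have hi₁r : m ∣ (i₀ + (j' - j₀)) - r := by
        have h := dvd_add hi₀ ⟨d, hd⟩
        have e : (i₀ - r) + (j' - j₀) = (i₀ + (j' - j₀)) - r := by ring
        rwa [e] at h
      have hlt₁ : i₀ + (j' - j₀) < j' := by linarith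
      have hik : c (i₀ + (j' - j₀)) k := hrt _ k hi₁r hk (by linarith)
      rcases hint (i₀ + (j' - j₀)) j' k hlt₁ hlt hik with h | h
      · exact absurd h hni₁
      · exact h
    have hnotPtt : ¬ PP m c t₀ t₀ := by
      intro h
      exact hsep t₀ 1 one_ne_zero
        (h t₀ (t₀ + 1 * m) (by simp) (by simp) (by linarith))
    refine Or.inr ⟨{i | PP m c i t₀}, {i | PP m c i t₀}ᶜ, ⟨r₀, hP⟩, ⟨t₀, hnotPtt⟩,
      Set.union_compl_self _, Set.inter_compl_self _, ?_, ?_, ?_⟩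
    · -- invariance of A
      intro i
      have key : ∀ x : ℤ, m ∣ x - i ↔ m ∣ x - (i + m) := by
        intro x
        constructor
        · intro h
          have := dvd_sub h (dvd_refl m)
          have e : (x - i) - m = x - (i + m) := by ring
          rwa [e] at this
        · intro h
          have := dvd_add h (dvd_refl m)
          have e : (x - (i + m)) + m = x - i := by ring
          rwa [e] at this
      constructor
      · intro h x y hx hy hxy
        exact h x y ((key x).mpr hx) hy hxy
      · intro h x y hx hy hxy
        exact h x y ((key x).mp hx) hy hxy
    · -- invariance of B
      intro i
      have key : ∀ x : ℤ, m ∣ x - i ↔ m ∣ x - (i + m) := by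
        intro x
        constructor
        · intro h
          have := dvd_sub h (dvd_refl m)
          have e : (x - i) - m = x - (i + m) := by ring
          rwa [e] at this
        · intro h
          have := dvd_add h (dvd_refl m)
          have e : (x - (i + m)) + m = x - i := by ring
          rwa [e] at this
      constructor
      · intro h hc
        apply h
        intro x y hx hy hxy
        exact hc x y ((key x).mp hx) hy hxy
      · intro h hc
        apply h
        intro x y hx hy hxy
        exact hc x y ((key x).mpr hx) hy hxy
    · -- crossing property
      intro i hi j hj hij
      by_cases hPij : PP m c i j
      · exact hPij i j (by simp) (by simp) hij
      · exact absurd (hA i j t₀ hi hPij) hj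
  · -- bounded case
    push_neg at hex
    -- a crossing dominates all pairs with the same residues and a smaller gap
    have key : ∀ i j i₀ j₀ : ℤ, i < j → c i j → m ∣ (i₀ - i) → m ∣ (j₀ - j) →
        i₀ < j₀ → j₀ - i₀ ≤ j - i → c i₀ j₀ := by
      intro i j i₀ j₀ hij hc hdi hdj hlt hle
      set g : ℤ := j₀ - i₀ with hg
      obtain ⟨v, hv⟩ : m ∣ (j - g) - i := by
        have h := dvd_sub hdi hdj
        have e : (i₀ - i) - (j₀ - j) = (j - g) - i := by rw [hg]; ring
        rwa [e] at h
      have evm : v * m = (j - g) - i := by linear_combination -hv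
      have hv0 : 0 ≤ v := by nlinarith
      have hcl : c (i + v * m) j := by
        have h := propL v.toNat i j hc ?_
        · rwa [Int.toNat_of_nonneg hv0] at h
        · rw [Int.toNat_of_nonneg hv0]; omega
      have e1 : i + v * m = j - g := by omega
      rw [e1] at hcl
      -- shift the pair (j - g, j) to (i₀, j₀)
      obtain ⟨d, hd⟩ : m ∣ (j₀ - j) := hdj
      have edm : d * m = j₀ - j := by linear_combination -hd
      have h2 := (hperZ d (j - g) j).mp hcl
      have e2 : j - g + d * m = i₀ := by omega
      have e3 : j + d * m = j₀ := by omega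
      rwa [e2, e3] at h2
    -- choose non-crossing witnesses for each pair of residues
    have hw : ∀ r t : ℤ, ∃ p : ℤ × ℤ, m ∣ (p.1 - r) ∧ m ∣ (p.2 - t) ∧ p.1 < p.2 ∧ ¬ c p.1 p.2 := by
      intro r t
      have h := hex r t
      unfold PP at h
      push_neg at h
      obtain ⟨i, j, h1, h2, h3, h4⟩ := h
      exact ⟨(i, j), h1, h2, h3, h4⟩
    choose w hw1 hw2 hw3 hw4 using hw
    set S : Finset (ℤ × ℤ) := Finset.Icc 0 (m - 1) ×ˢ Finset.Icc 0 (m - 1) with hS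
    have hSne : S.Nonempty := ⟨(0, 0), by simp [hS]; omega⟩
    set R : ℤ := S.sup' hSne (fun p => (w p.1 p.2).2 - (w p.1 p.2).1) with hR
    have hR0 : 0 ≤ R := by
      have h := Finset.le_sup' (fun p : ℤ × ℤ => (w p.1 p.2).2 - (w p.1 p.2).1) hSne.choose_spec
      have := hw3 hSne.choose.1 hSne.choose.2
      omega
    have hbound : ∀ i j : ℤ, i < j → c i j → j - i ≤ R := by
      intro i j hij hc
      by_contra hgt
      push_neg at hgt
      have hmem : (i % m, j % m) ∈ S := by
        simp [hS]
        refine ⟨⟨Int.emod_nonneg i (by omega), ?_⟩, Int.emod_nonneg j (by omega), ?_⟩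
        · have := Int.emod_lt_of_pos i hm0; omega
        · have := Int.emod_lt_of_pos j hm0; omega
      have hle : (w (i % m) (j % m)).2 - (w (i % m) (j % m)).1 ≤ R :=
        Finset.le_sup' (fun p : ℤ × ℤ => (w p.1 p.2).2 - (w p.1 p.2).1) hmem
      have hdi : m ∣ (w (i % m) (j % m)).1 - i := by
        have h1 := hw1 (i % m) (j % m)
        have h2 : m ∣ i - i % m := Int.dvd_self_sub_of_emod_eq rfl
        have h := dvd_sub h1 h2
        have e : ((w (i % m) (j % m)).1 - i % m) - (i - i % m) = (w (i % m) (j % m)).1 - i := by ring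
        rwa [e] at h
      have hdj : m ∣ (w (i % m) (j % m)).2 - j := by
        have h1 := hw2 (i % m) (j % m)
        have h2 : m ∣ j - j % m := Int.dvd_self_sub_of_emod_eq rfl
        have h := dvd_sub h1 h2
        have e : ((w (i % m) (j % m)).2 - j % m) - (j - j % m) = (w (i % m) (j % m)).2 - j := by ring
        rwa [e] at h
      exact hw4 (i % m) (j % m)
        (key i j _ _ hij hc hdi hdj (hw3 _ _) (by omega))
    refine Or.inl ⟨R, hR0, ?_⟩
    intro i j hc
    rcases lt_trichotomy i j with h | h | h
    · have := hbound i j h hc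
      rw [abs_of_nonpos (by omega)]
      omega
    · simp [h]; omega
    · have := hbound j i h (hsymm i j hc)
      rw [abs_of_nonneg (by omega)]
      omega
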